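/- Let (X,p) be a finite probability space and let u,w : X → (−1,1). Then (1/2)·E[(u−w)·(u/√(1−u²) − w/√(1−w²))] ≥ ((E[u−w]/2)² + (E[√(1−u²) − √(1−w²)]/2)²) · (1/E[√(1−u²)] + 1/E[√(1−w²)]). -/

import Mathlib

/-- Weighted Cauchy–Schwarz in Engel form: `(∑ p f)² ≤ (∑ p f²/s)·(∑ p s)`. -/
lemma weighted_CS {X : Type} [Fintype X] (p s f : X → ℝ)
    (hp : ∀ x, 0 ≤ p x) (hs : ∀ x, 0 < s x) :
    (∑ x, p x * f x) ^ 2 ≤ (∑ x, p x * (f x ^ 2 / s x)) * (∑ x, p x * s x) := by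
  apply Finset.sum_sq_le_sum_mul_sum_of_sq_eq_mul
  · exact fun i _ => mul_nonneg (hp i) (div_nonneg (sq_nonneg _) (hs i).le)
  · exact fun i _ => mul_nonneg (hp i) (hs i).le
  · intro i _
    field_simp [(hs i).ne']

theorem stmt14 (X : Type) [Fintype X] (p u w : X → ℝ)
    (hp : ∀ x, 0 ≤ p x) (hp1 : ∑ x, p x = 1)
    (hu : ∀ x, u x ∈ Set.Ioo (-1 : ℝ) 1) (hw : ∀ x, w x ∈ Set.Ioo (-1 : ℝ) 1) :
    (1 / 2) * (∑ x, p x * ((u x - w x) *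
        (u x / Real.sqrt (1 - (u x) ^ 2) - w x / Real.sqrt (1 - (w x) ^ 2)))) ≥
      (((∑ x, p x * (u x - w x)) / 2) ^ 2 +
        ((∑ x, p x * (Real.sqrt (1 - (u x) ^ 2) - Real.sqrt (1 - (w x) ^ 2))) / 2) ^ 2) *
        (1 / (∑ x, p x * Real.sqrt (1 - (u x) ^ 2)) +
         1 / (∑ x, p x * Real.sqrt (1 - (w x) ^ 2))) := by
  set a : X → ℝ := fun x => Real.sqrt (1 - (u x) ^ 2) with ha_def
  set b : X → ℝ := fun x => Real.sqrt (1 - (w x) ^ 2) with hb_def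
  have hu2 : ∀ x, (0:ℝ) < 1 - (u x) ^ 2 := by
    intro x
    obtain ⟨h1, h2⟩ := hu x
    nlinarith
  have hw2 : ∀ x, (0:ℝ) < 1 - (w x) ^ 2 := by
    intro x
    obtain ⟨h1, h2⟩ := hw x
    nlinarith
  have ha : ∀ x, 0 < a x := fun x => Real.sqrt_pos.2 (hu2 x)
  have hb : ∀ x, 0 < b x := fun x => Real.sqrt_pos.2 (hw2 x)
  have ha2 : ∀ x, a x ^ 2 = 1 - (u x) ^ 2 := fun x => Real.sq_sqrt (hu2 x).le
  have hb2 : ∀ x, b x ^ 2 = 1 - (w x) ^ 2 := fun x => Real.sq_sqrt (hw2 x).le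
  -- positivity of the denominators A = ∑ p a, B = ∑ p b
  obtain ⟨x₀, hx₀⟩ : ∃ x, 0 < p x := by
    by_contra h
    push_neg at h
    have : ∑ x, p x = 0 := Finset.sum_eq_zero fun x _ => le_antisymm (h x) (hp x)
    rw [hp1] at this; norm_num at this
  have hA : 0 < ∑ x, p x * a x := by
    have h1 : p x₀ * a x₀ ≤ ∑ x, p x * a x :=
      Finset.single_le_sum (fun x _ => mul_nonneg (hp x) (ha x).le) (Finset.mem_univ x₀)
    nlinarith [ha x₀]
  have hB : 0 < ∑ x, p x * b x := by
    have h1 : p x₀ * b x₀ ≤ ∑ x, p x * b x :=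
      Finset.single_le_sum (fun x _ => mul_nonneg (hp x) (hb x).le) (Finset.mem_univ x₀)
    nlinarith [hb x₀]
  -- pointwise identity
  have key : ∀ x, (u x - w x) * (u x / a x - w x / b x) =
      ((u x - w x) ^ 2 + (a x - b x) ^ 2) * (1 / (2 * a x) + 1 / (2 * b x)) := by
    intro x
    have h1 := ha2 x
    have h2 := hb2 x
    have h3 := (ha x).ne'
    have h4 := (hb x).ne'
    field_simp
    linear_combination (b x - a x) * h1 + (a x - b x) * h2
  -- rewrite LHS
  have lhs_eq : (∑ x, p x * ((u x - w x) * (u x / a x - w x / b x))) =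
      (1/2) * ((∑ x, p x * ((u x - w x) ^ 2 / a x)) + (∑ x, p x * ((u x - w x) ^ 2 / b x))
        + (∑ x, p x * ((a x - b x) ^ 2 / a x)) + (∑ x, p x * ((a x - b x) ^ 2 / b x))) := by
    rw [← Finset.sum_add_distrib, ← Finset.sum_add_distrib, ← Finset.sum_add_distrib,
      Finset.mul_sum]
    apply Finset.sum_congr rfl
    intro x _
    rw [key x]
    have h3 := (ha x).ne'
    have h4 := (hb x).ne'
    field_simp
    ring
  -- four CS inequalities
  have cs1 := weighted_CS p a (fun x => u x - w x) hp ha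
  have cs2 := weighted_CS p b (fun x => u x - w x) hp hb
  have cs3 := weighted_CS p a (fun x => a x - b x) hp ha
  have cs4 := weighted_CS p b (fun x => a x - b x) hp hb
  rw [ge_iff_le, lhs_eq]
  have e1 : (∑ x, p x * (u x - w x)) ^ 2 / (∑ x, p x * a x) ≤
      ∑ x, p x * ((u x - w x) ^ 2 / a x) := by
    rw [div_le_iff₀ hA]; exact cs1
  have e2 : (∑ x, p x * (u x - w x)) ^ 2 / (∑ x, p x * b x) ≤
      ∑ x, p x * ((u x - w x) ^ 2 / b x) := by
    rw [div_le_iff₀ hB]; exact cs2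
  have e3 : (∑ x, p x * (a x - b x)) ^ 2 / (∑ x, p x * a x) ≤
      ∑ x, p x * ((a x - b x) ^ 2 / a x) := by
    rw [div_le_iff₀ hA]; exact cs3
  have e4 : (∑ x, p x * (a x - b x)) ^ 2 / (∑ x, p x * b x) ≤
      ∑ x, p x * ((a x - b x) ^ 2 / b x) := by
    rw [div_le_iff₀ hB]; exact cs4
  have expand : (((∑ x, p x * (u x - w x)) / 2) ^ 2 + ((∑ x, p x * (a x - b x)) / 2) ^ 2) *
      (1 / (∑ x, p x * a x) + 1 / (∑ x, p x * b x)) =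
      (1/4) * ((∑ x, p x * (u x - w x)) ^ 2 / (∑ x, p x * a x)
        + (∑ x, p x * (u x - w x)) ^ 2 / (∑ x, p x * b x)
        + (∑ x, p x * (a x - b x)) ^ 2 / (∑ x, p x * a x)
        + (∑ x, p x * (a x - b x)) ^ 2 / (∑ x, p x * b x)) := by
    field_simp
    ring
  rw [expand]
  linarith
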